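/- Let X, Y be finite totally ordered sets and u : X × Y → ℝ strictly supermodular. If a set S ⊆ X × Y is u-cyclically monotone (with weak inequality), then S is co-monotone: for all (x,y), (x',y') ∈ S, x > x' implies y ≥ y'. -/
import Mathlib


/-- u is strictly supermodular. -/
def StrictSupermod {X Y : Type*} [LT X] [LT Y] (u : X → Y → ℝ) : Prop :=
  ∀ x x' y y', x' < x → y' < y → u x y' + u x' y < u x y + u x' y'

/-- A set is co-monotone. -/
def CoMono {X Y : Type*} [LT X] [LE Y] (S : Set (X × Y)) : Prop :=
  ∀ p ∈ S, ∀ q ∈ S, q.1 < p.1 → q.2 ≤ p.2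

/-- A set `S ⊆ X × Y` is (weakly) `u`-cyclically monotone. -/
def CycMono {X Y : Type*} (u : X → Y → ℝ) (S : Set (X × Y)) : Prop :=
  ∀ (N : ℕ) (x : Fin N → X) (y : Fin N → Y),
    (∀ i, (x i, y i) ∈ S) →
    ∑ i, u (x i) (y (finRotate N i)) ≤ ∑ i, u (x i) (y i)

/-- If u is strictly supermodular and S is u-cyclically monotone (weak inequality), then S
is co-monotone. -/
theorem stmt5 {X Y : Type*} [Fintype X] [Fintype Y] [LinearOrder X] [LinearOrder Y]
    (u : X → Y → ℝ) (hu : StrictSupermod u)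
    (S : Set (X × Y)) (hS : CycMono u S) :
    CoMono S := by
  rintro ⟨x, y⟩ hp ⟨x', y'⟩ hq hlt
  by_contra hy
  push_neg at hy
  have h2 := hS 2 ![x, x'] ![y, y'] (by
    intro i
    fin_cases i <;> simpa using (by assumption : _ ∈ S))
  have hr0 : finRotate 2 (0 : Fin 2) = 1 := by decide
  have hr1 : finRotate 2 (1 : Fin 2) = 0 := by decide
  simp only [Fin.sum_univ_two, hr0, hr1, Matrix.cons_val_zero, Matrix.cons_val_one,
    Matrix.head_cons] at h2
  have := hu x x' y' y hlt hy
  linarith
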